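/- With h(x) = x e^{x²/2} ∫_x^∞ e^{−z²/2} dz, for all x > 0: x²/(x²+1) ≤ h(x) ≤ (x²+2)/(x²+3). -/

import Mathlib

open Real MeasureTheory Filter

noncomputable def h (x : ℝ) : ℝ :=
  x * Real.exp (x ^ 2 / 2) * ∫ z in Set.Ioi x, Real.exp (-z ^ 2 / 2)

lemma phi_int : Integrable (fun z:ℝ => Real.exp (-z^2/2)) := by
  have := integrable_exp_neg_mul_sq (by norm_num : (0:ℝ) < 1/2)
  convert this using 2 with z; ring

lemma phi_tendsto : Tendsto (fun z:ℝ => Real.exp (-z^2/2)) atTop (nhds 0) := by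
  apply Real.tendsto_exp_atBot.comp
  have h1 : Tendsto (fun z:ℝ => z^2) atTop atTop := tendsto_pow_atTop (by norm_num)
  have h2 := (tendsto_neg_atBot_iff.mpr h1).atBot_div_const (by norm_num : (0:ℝ) < 2)
  simpa [neg_div] using h2

lemma interval_eq {x T : ℝ} (hTx : x ≤ T) {g D : ℝ → ℝ}
    (hd : ∀ z ∈ Set.Ici x, HasDerivAt g (-D z) z)
    (hDc : ContinuousOn D (Set.Ici x)) :
    ∫ z in x..T, D z = g x - g T := by
  have hIcc : Set.uIcc x T = Set.Icc x T := Set.uIcc_of_le hTx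
  have hsub : Set.uIcc x T ⊆ Set.Ici x := by rw [hIcc]; exact Set.Icc_subset_Ici_self
  have hDint : IntervalIntegrable D MeasureTheory.volume x T :=
    (hDc.mono hsub).intervalIntegrable
  have := intervalIntegral.integral_eq_sub_of_hasDerivAt
    (fun z hz => hd z (hsub hz)) hDint.neg
  rw [intervalIntegral.integral_neg] at this
  linarith

lemma tail_upper {x : ℝ} {g D : ℝ → ℝ}
    (hd : ∀ z ∈ Set.Ici x, HasDerivAt g (-D z) z)
    (hDc : ContinuousOn D (Set.Ici x))
    (hge : ∀ z ∈ Set.Ici x, Real.exp (-z^2/2) ≤ D z)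
    (hg0 : Tendsto g atTop (nhds 0)) :
    ∫ z in Set.Ioi x, Real.exp (-z^2/2) ≤ g x := by
  have hT : Tendsto (fun T => ∫ z in x..T, Real.exp (-z^2/2)) atTop
      (nhds (∫ z in Set.Ioi x, Real.exp (-z^2/2))) :=
    intervalIntegral_tendsto_integral_Ioi x phi_int.integrableOn tendsto_id
  have hR : Tendsto (fun T => g x - g T) atTop (nhds (g x)) := by
    simpa using tendsto_const_nhds.sub hg0
  refine le_of_tendsto_of_tendsto hT hR ?_
  filter_upwards [eventually_ge_atTop x] with T hTx
  have hsub : Set.uIcc x T ⊆ Set.Ici x := by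
    rw [Set.uIcc_of_le hTx]; exact Set.Icc_subset_Ici_self
  calc ∫ z in x..T, Real.exp (-z^2/2) ≤ ∫ z in x..T, D z := by
        apply intervalIntegral.integral_mono_on hTx
          (phi_int.intervalIntegrable)
          ((hDc.mono hsub).intervalIntegrable)
        intro z hz; exact hge z (Set.Icc_subset_Ici_self hz)
    _ = g x - g T := interval_eq hTx hd hDc

lemma tail_lower {x : ℝ} {g D : ℝ → ℝ}
    (hd : ∀ z ∈ Set.Ici x, HasDerivAt g (-D z) z)
    (hDc : ContinuousOn D (Set.Ici x))
    (hle : ∀ z ∈ Set.Ici x, D z ≤ Real.exp (-z^2/2))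
    (hg0 : Tendsto g atTop (nhds 0)) :
    g x ≤ ∫ z in Set.Ioi x, Real.exp (-z^2/2) := by
  have hT : Tendsto (fun T => ∫ z in x..T, Real.exp (-z^2/2)) atTop
      (nhds (∫ z in Set.Ioi x, Real.exp (-z^2/2))) :=
    intervalIntegral_tendsto_integral_Ioi x phi_int.integrableOn tendsto_id
  have hR : Tendsto (fun T => g x - g T) atTop (nhds (g x)) := by
    simpa using tendsto_const_nhds.sub hg0
  refine le_of_tendsto_of_tendsto hR hT ?_
  filter_upwards [eventually_ge_atTop x] with T hTx
  have hsub : Set.uIcc x T ⊆ Set.Ici x := by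
    rw [Set.uIcc_of_le hTx]; exact Set.Icc_subset_Ici_self
  calc g x - g T = ∫ z in x..T, D z := (interval_eq hTx hd hDc).symm
    _ ≤ ∫ z in x..T, Real.exp (-z^2/2) := by
        apply intervalIntegral.integral_mono_on hTx
          ((hDc.mono hsub).intervalIntegrable)
          (phi_int.intervalIntegrable)
        intro z hz; exact hle z (Set.Icc_subset_Ici_self hz)

-- derivative of the exp part
lemma exp_deriv (z : ℝ) :
    HasDerivAt (fun z:ℝ => Real.exp (-z^2/2)) (-z * Real.exp (-z^2/2)) z := by
  have h1 : HasDerivAt (fun z:ℝ => -z^2/2) (-z) z := by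
    have := ((hasDerivAt_pow 2 z).neg.div_const 2)
    refine this.congr_deriv ?_; (try simp only [id_eq]); push_cast; ring_nf
  have := h1.exp
  convert this using 1; ring

noncomputable def D1 (z : ℝ) : ℝ := (z^4+2*z^2-1)/(z^2+1)^2 * Real.exp (-z^2/2)

noncomputable def g1 (z : ℝ) : ℝ := z/(z^2+1) * Real.exp (-z^2/2)

lemma g1_deriv {z : ℝ} : HasDerivAt g1 (-D1 z) z := by
  have hne : (z^2+1) ≠ 0 := by positivity
  have h1 : HasDerivAt (fun z:ℝ => z/(z^2+1))
      ((1*(z^2+1) - z*(2*z))/(z^2+1)^2) z := by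
    have := (hasDerivAt_id z).div ((hasDerivAt_pow 2 z).add_const 1) hne
    refine this.congr_deriv ?_; (try simp only [id_eq]); push_cast; ring_nf
  have := h1.mul (exp_deriv z)
  refine this.congr_deriv ?_
  unfold D1
  push_cast
  field_simp
  ring

noncomputable def D2 (z : ℝ) : ℝ :=
  ((z*(z^2+3))^2+6)/(z*(z^2+3))^2 * Real.exp (-z^2/2)

noncomputable def g2 (z : ℝ) : ℝ := (z^2+2)/(z*(z^2+3)) * Real.exp (-z^2/2)

lemma g2_deriv {z : ℝ} (hz : 0 < z) : HasDerivAt g2 (-D2 z) z := by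
  have hne : z*(z^2+3) ≠ 0 := by positivity
  have h1 : HasDerivAt (fun z:ℝ => (z^2+2)/(z*(z^2+3)))
      (((2*z)*(z*(z^2+3)) - (z^2+2)*(1*(z^2+3)+z*(2*z)))/(z*(z^2+3))^2) z := by
    have hu : HasDerivAt (fun z:ℝ => z^2+2) (2*z) z := by
      have := (hasDerivAt_pow 2 z).add_const 2
      refine this.congr_deriv ?_; (try simp only [id_eq]); push_cast; ring_nf
    have hv : HasDerivAt (fun z:ℝ => z*(z^2+3)) (1*(z^2+3)+z*(2*z)) z := by
      have hv2 : HasDerivAt (fun z:ℝ => z^2+3) (2*z) z := by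
        have := (hasDerivAt_pow 2 z).add_const 3
        refine this.congr_deriv ?_; (try simp only [id_eq]); push_cast; ring_nf
      exact (hasDerivAt_id z).mul hv2
    exact hu.div hv hne
  have := h1.mul (exp_deriv z)
  refine this.congr_deriv ?_
  unfold D2
  push_cast
  field_simp
  ring

lemma D1_le (z : ℝ) : D1 z ≤ Real.exp (-z^2/2) := by
  unfold D1
  have h1 : (z^4+2*z^2-1)/(z^2+1)^2 ≤ 1 := by
    rw [div_le_one (by positivity)]; nlinarith [sq_nonneg z]
  calc (z^4+2*z^2-1)/(z^2+1)^2 * Real.exp (-z^2/2)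
      ≤ 1 * Real.exp (-z^2/2) :=
        mul_le_mul_of_nonneg_right h1 (Real.exp_nonneg _)
    _ = _ := one_mul _

lemma D2_ge {z : ℝ} (hz : 0 < z) : Real.exp (-z^2/2) ≤ D2 z := by
  unfold D2
  have h1 : (1:ℝ) ≤ ((z*(z^2+3))^2+6)/(z*(z^2+3))^2 := by
    rw [le_div_iff₀ (by positivity)]; nlinarith
  calc Real.exp (-z^2/2) = 1 * Real.exp (-z^2/2) := (one_mul _).symm
    _ ≤ _ := mul_le_mul_of_nonneg_right h1 (Real.exp_nonneg _)

lemma g1_tendsto : Tendsto g1 atTop (nhds 0) := by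
  apply squeeze_zero' ?_ ?_ phi_tendsto
  · filter_upwards [eventually_ge_atTop (0:ℝ)] with z hz
    unfold g1; positivity
  · filter_upwards [eventually_ge_atTop (0:ℝ)] with z hz
    unfold g1
    have h1 : z/(z^2+1) ≤ 1 := by
      rw [div_le_one (by positivity)]; nlinarith [sq_nonneg (z-1)]
    calc z/(z^2+1) * Real.exp (-z^2/2) ≤ 1 * Real.exp (-z^2/2) :=
          mul_le_mul_of_nonneg_right h1 (Real.exp_nonneg _)
      _ = _ := one_mul _

lemma g2_tendsto : Tendsto g2 atTop (nhds 0) := by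
  apply squeeze_zero' ?_ ?_ phi_tendsto
  · filter_upwards [eventually_ge_atTop (1:ℝ)] with z hz
    unfold g2
    have hz0 : (0:ℝ) < z := lt_of_lt_of_le one_pos hz
    positivity
  · filter_upwards [eventually_ge_atTop (1:ℝ)] with z hz
    unfold g2
    have hz0 : (0:ℝ) < z := lt_of_lt_of_le one_pos hz
    have h1 : (z^2+2)/(z*(z^2+3)) ≤ 1 := by
      rw [div_le_one (by positivity)]; nlinarith
    calc (z^2+2)/(z*(z^2+3)) * Real.exp (-z^2/2) ≤ 1 * Real.exp (-z^2/2) :=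
          mul_le_mul_of_nonneg_right h1 (Real.exp_nonneg _)
      _ = _ := one_mul _

theorem stmt_15 (x : ℝ) (hx : 0 < x) :
    x ^ 2 / (x ^ 2 + 1) ≤ h x ∧ h x ≤ (x ^ 2 + 2) / (x ^ 2 + 3) := by
  have he : Real.exp (x^2/2) * Real.exp (-x^2/2) = 1 := by
    have hz : x^2/2 + -x^2/2 = 0 := by ring
    rw [← Real.exp_add, hz, Real.exp_zero]
  have hD1c : ContinuousOn D1 (Set.Ici x) := by
    apply ContinuousOn.mul
    · apply ContinuousOn.div (by fun_prop) (by fun_prop)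
      intro z _; positivity
    · fun_prop
  have hD2c : ContinuousOn D2 (Set.Ici x) := by
    apply ContinuousOn.mul
    · apply ContinuousOn.div (by fun_prop) (by fun_prop)
      intro z hz
      have h0 : 0 < z := lt_of_lt_of_le hx hz
      positivity
    · fun_prop
  have low : g1 x ≤ ∫ z in Set.Ioi x, Real.exp (-z^2/2) :=
    tail_lower (fun z _ => g1_deriv) hD1c (fun z _ => D1_le z) g1_tendsto
  have up : (∫ z in Set.Ioi x, Real.exp (-z^2/2)) ≤ g2 x :=
    tail_upper (fun z hz => g2_deriv (lt_of_lt_of_le hx hz)) hD2c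
      (fun z hz => D2_ge (lt_of_lt_of_le hx hz)) g2_tendsto
  have hpos : (0:ℝ) < x * Real.exp (x^2/2) := by positivity
  constructor
  · have h2 := mul_le_mul_of_nonneg_left low hpos.le
    have key : x * Real.exp (x^2/2) * g1 x = x^2/(x^2+1) := by
      unfold g1
      calc x * Real.exp (x^2/2) * (x/(x^2+1) * Real.exp (-x^2/2))
          = x^2/(x^2+1) * (Real.exp (x^2/2) * Real.exp (-x^2/2)) := by ring
        _ = x^2/(x^2+1) := by rw [he, mul_one]
    rw [key] at h2
    unfold h
    exact h2
  · have h2 := mul_le_mul_of_nonneg_left up hpos.le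
    have key : x * Real.exp (x^2/2) * g2 x = (x^2+2)/(x^2+3) := by
      unfold g2
      calc x * Real.exp (x^2/2) * ((x^2+2)/(x*(x^2+3)) * Real.exp (-x^2/2))
          = x*(x^2+2)/(x*(x^2+3)) * (Real.exp (x^2/2) * Real.exp (-x^2/2)) := by ring
        _ = x*(x^2+2)/(x*(x^2+3)) := by rw [he, mul_one]
        _ = (x^2+2)/(x^2+3) := by rw [mul_div_mul_left _ _ hx.ne']
    rw [key] at h2
    unfold h
    exact h2
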